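/- arXiv:2306.13185 — 3 statements merged into one kernel-verified Lean document; each statement's English description precedes it below -/
import Mathlib

section
/- (Optimistic rate.) Fix any integer k ≥ 0 and let ε = √((k² + 2kn)/n²). For any δ ≥ 0 for which a positive solution κ_δ of the self-consistent equation exists, it holds that (1 − ε)·√R̃_δ − √Ȓ_δ ≤ √( (Σ_{i>k} λ_i) · N_δ / n ), where Ȓ_δ = (δ²/(n² κ_δ²)) · R̃_δ is the predicted training error and N_δ = Σ_{i≥1} λ_i v_i²/(λ_i + κ_δ)² + (R̃_δ/n) · Σ_{i≥1} λ_i/(λ_i + κ_δ)² is the predicted squared RKHS norm of the ridge predictor. -/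
set_option maxHeartbeats 2000000


/-- Optimistic rate: Fix `k ≥ 0` and let
`ε = √((k² + 2kn)/n²)`. For any `δ ≥ 0` with a positive solution `κ_δ` of the
self-consistent equation,
`(1 − ε)·√R̃_δ − √Ȓ_δ ≤ √((Σ_{i>k} λ_i)·N_δ/n)`, where
`Ȓ_δ = (δ²/(n²κ_δ²))·R̃_δ` is the predicted training error and `N_δ` is the
predicted squared RKHS norm. (Here `lam i` denotes `λ_{i+1}`.) -/
theorem optimistic_rate
    (n : ℕ) (hn : 1 ≤ n)
    (lam : ℕ → ℝ) (hlam_nonneg : ∀ i, 0 ≤ lam i) (hlam_mono : Antitone lam)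
    (hlam_summable : Summable lam) (hlam_ne : ∃ i, lam i ≠ 0)
    (v : ℕ → ℝ) (hv : Summable fun i => v i ^ 2)
    (σ2 : ℝ) (hσ2 : 0 ≤ σ2)
    (δ : ℝ) (hδ : 0 ≤ δ)
    (κδ : ℝ) (hκδ : 0 < κδ)
    (hκδ_eq : ∑' i, lam i / (lam i + κδ) + δ / κδ = (n : ℝ))
    (Eδ : ℝ)
    (hEδ : Eδ = (n : ℝ) / ((n : ℝ) - ∑' i, (lam i / (lam i + κδ)) ^ 2))
    (Rt : ℝ)
    (hRt : Rt = Eδ * (∑' i, (1 - lam i / (lam i + κδ)) ^ 2 * v i ^ 2 + σ2))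
    (Rhat : ℝ)
    (hRhat : Rhat = δ ^ 2 / ((n : ℝ) ^ 2 * κδ ^ 2) * Rt)
    (Nδ : ℝ)
    (hNδ : Nδ = ∑' i, lam i * v i ^ 2 / (lam i + κδ) ^ 2
        + Rt / n * ∑' i, lam i / (lam i + κδ) ^ 2)
    (k : ℕ)
    (ε : ℝ) (hε : ε = Real.sqrt (((k : ℝ) ^ 2 + 2 * k * n) / (n : ℝ) ^ 2)) :
    (1 - ε) * Real.sqrt Rt - Real.sqrt Rhat
      ≤ Real.sqrt ((∑' i, lam (k + i)) * Nδ / n) := by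
  have hn' : (0:ℝ) < n := by exact_mod_cast hn
  have hden : ∀ i, 0 < lam i + κδ := fun i => add_pos_of_nonneg_of_pos (hlam_nonneg i) hκδ
  have hL0 : ∀ i, 0 ≤ lam i / (lam i + κδ) := fun i => div_nonneg (hlam_nonneg i) (hden i).le
  have hL1 : ∀ i, lam i / (lam i + κδ) ≤ 1 := fun i =>
    div_le_one_of_le₀ (le_add_of_nonneg_right hκδ.le) (hden i).le
  have hLsum : Summable (fun i => lam i / (lam i + κδ)) := by
    refine Summable.of_nonneg_of_le hL0 (fun i => ?_) (hlam_summable.div_const κδ)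
    exact div_le_div_of_nonneg_left (hlam_nonneg i) hκδ (le_add_of_nonneg_left (hlam_nonneg i))
  set s := ∑' i, lam i / (lam i + κδ) with hsdef
  have hs0 : 0 ≤ s := tsum_nonneg hL0
  have hδκ : δ = ((n:ℝ) - s) * κδ := by
    have h := hκδ_eq
    field_simp at h
    nlinarith [h]
  have hsn : s ≤ n := by nlinarith [div_nonneg hδ hκδ.le, hκδ_eq]
  have hsn' : 0 ≤ 1 - s / n := by
    have : s / n ≤ 1 := (div_le_one hn').2 hsn
    linarith
  -- Rt is nonnegative
  have hL2sum : Summable (fun i => (lam i / (lam i + κδ)) ^ 2) := by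
    refine Summable.of_nonneg_of_le (fun i => sq_nonneg _) (fun i => ?_) hLsum
    rw [sq]
    exact mul_le_of_le_one_left (hL0 i) (hL1 i)
  have hsumsq : ∑' i, (lam i / (lam i + κδ)) ^ 2 ≤ s := by
    refine Summable.tsum_le_tsum (fun i => ?_) hL2sum hLsum
    rw [sq]
    exact mul_le_of_le_one_left (hL0 i) (hL1 i)
  have hEδ0 : 0 ≤ Eδ := by
    rw [hEδ]; exact div_nonneg hn'.le (by linarith)
  have hRt0 : 0 ≤ Rt := by
    rw [hRt]
    exact mul_nonneg hEδ0 (add_nonneg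
      (tsum_nonneg fun i => mul_nonneg (sq_nonneg _) (sq_nonneg _)) hσ2)
  -- sqrt Rhat = (1 - s/n) * sqrt Rt
  have hRhat' : Rhat = (1 - s / n) ^ 2 * Rt := by
    rw [hRhat, hδκ]
    field_simp
  have hsqrtRhat : Real.sqrt Rhat = (1 - s / n) * Real.sqrt Rt := by
    rw [hRhat', Real.sqrt_mul (sq_nonneg _), Real.sqrt_sq hsn']
  have hgoal : (1 - ε) * Real.sqrt Rt - Real.sqrt Rhat = (s / n - ε) * Real.sqrt Rt := by
    rw [hsqrtRhat]; ring
  rw [hgoal]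
  rcases le_or_gt (s / n - ε) 0 with hc | hc
  · exact le_trans (mul_nonpos_of_nonpos_of_nonneg hc (Real.sqrt_nonneg _))
      (Real.sqrt_nonneg _)
  -- main case
  set tail := ∑' i, lam (k + i) with htaildef
  have htailsum : Summable (fun i => lam (k + i)) := by
    refine ((summable_nat_add_iff k).2 hlam_summable).congr fun i => ?_
    rw [add_comm]
  have htail0 : 0 ≤ tail := tsum_nonneg fun i => hlam_nonneg _
  set C := ∑' i, lam i / (lam i + κδ) ^ 2 with hCdef
  have hCsum : Summable (fun i => lam i / (lam i + κδ) ^ 2) := by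
    refine Summable.of_nonneg_of_le (fun i => div_nonneg (hlam_nonneg i) (sq_nonneg _))
      (fun i => ?_) (hlam_summable.div_const (κδ ^ 2))
    exact div_le_div_of_nonneg_left (hlam_nonneg i) (pow_pos hκδ 2)
      (by nlinarith [hlam_nonneg i])
  have hC0 : 0 ≤ C := tsum_nonneg fun i => div_nonneg (hlam_nonneg i) (sq_nonneg _)
  -- shifted sums
  have hLshift_sum : Summable (fun i => lam (k + i) / (lam (k + i) + κδ)) := by
    refine ((summable_nat_add_iff k).2 hLsum).congr fun i => ?_
    rw [add_comm]
  have hCshift_sum : Summable (fun i => lam (k + i) / (lam (k + i) + κδ) ^ 2) := by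
    refine ((summable_nat_add_iff k).2 hCsum).congr fun i => ?_
    rw [add_comm]
  set t := ∑' i, lam (k + i) / (lam (k + i) + κδ) with htdef
  have ht0 : 0 ≤ t := tsum_nonneg fun i => hL0 _
  -- head bound : s - t ≤ k
  have hst : s = (∑ i ∈ Finset.range k, lam i / (lam i + κδ)) + t := by
    rw [htdef, hsdef, ← Summable.sum_add_tsum_nat_add k hLsum]
    congr 1
    exact tsum_congr fun i => by rw [add_comm]
  have hhead : ∑ i ∈ Finset.range k, lam i / (lam i + κδ) ≤ (k : ℝ) := by
    calc ∑ i ∈ Finset.range k, lam i / (lam i + κδ)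
        ≤ ∑ _i ∈ Finset.range k, (1:ℝ) := Finset.sum_le_sum fun i _ => hL1 i
      _ = (k : ℝ) := by simp
  -- ε ≥ k/n
  have hεk : (k : ℝ) / n ≤ ε := by
    rw [hε]
    have h1 : ((k : ℝ) / n) ^ 2 ≤ ((k : ℝ) ^ 2 + 2 * k * n) / (n : ℝ) ^ 2 := by
      rw [div_pow]
      gcongr
      nlinarith [Nat.cast_nonneg (α := ℝ) k]
    calc (k : ℝ) / n = Real.sqrt (((k : ℝ) / n) ^ 2) :=
          (Real.sqrt_sq (by positivity)).symm
      _ ≤ _ := Real.sqrt_le_sqrt h1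
  have hkey1 : s / n - ε ≤ t / n := by
    have h1 : s - (k : ℝ) ≤ t := by linarith
    have h2 : (s - (k : ℝ)) / n ≤ t / n := by gcongr
    have h3 : s / n - (k : ℝ) / n = (s - (k : ℝ)) / n := by ring
    linarith
  -- Cauchy–Schwarz: t ≤ sqrt (tail * C)
  have hCshift_le : ∑' i, lam (k + i) / (lam (k + i) + κδ) ^ 2 ≤ C := by
    have h := Summable.sum_add_tsum_nat_add k hCsum
    have he : ∑' i, lam (i + k) / (lam (i + k) + κδ) ^ 2
        = ∑' i, lam (k + i) / (lam (k + i) + κδ) ^ 2 :=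
      tsum_congr fun i => by rw [add_comm]
    have hh : 0 ≤ ∑ i ∈ Finset.range k, lam i / (lam i + κδ) ^ 2 :=
      Finset.sum_nonneg fun i _ => div_nonneg (hlam_nonneg i) (sq_nonneg _)
    rw [hCdef]
    linarith [h, he.symm.trans_le (le_of_eq rfl)]
  have hCS : t ≤ Real.sqrt (tail * C) := by
    refine Summable.tsum_le_of_sum_le hLshift_sum fun A => ?_
    have hrw : ∀ i, lam (k + i) / (lam (k + i) + κδ)
        = Real.sqrt (lam (k + i)) * (Real.sqrt (lam (k + i)) / (lam (k + i) + κδ)) := by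
      intro i
      rw [mul_div_assoc', Real.mul_self_sqrt (hlam_nonneg _)]
    rw [Finset.sum_congr rfl fun i _ => hrw i]
    have hcs := Finset.sum_mul_sq_le_sq_mul_sq A (fun i => Real.sqrt (lam (k + i)))
      (fun i => Real.sqrt (lam (k + i)) / (lam (k + i) + κδ))
    have e1 : ∑ i ∈ A, Real.sqrt (lam (k + i)) ^ 2 = ∑ i ∈ A, lam (k + i) :=
      Finset.sum_congr rfl fun i _ => Real.sq_sqrt (hlam_nonneg _)
    have e2 : ∑ i ∈ A, (Real.sqrt (lam (k + i)) / (lam (k + i) + κδ)) ^ 2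
        = ∑ i ∈ A, lam (k + i) / (lam (k + i) + κδ) ^ 2 :=
      Finset.sum_congr rfl fun i _ => by rw [div_pow, Real.sq_sqrt (hlam_nonneg _)]
    rw [e1, e2] at hcs
    have b1 : ∑ i ∈ A, lam (k + i) ≤ tail :=
      Summable.sum_le_tsum A (fun i _ => hlam_nonneg _) htailsum
    have b2 : ∑ i ∈ A, lam (k + i) / (lam (k + i) + κδ) ^ 2 ≤ C :=
      le_trans (Summable.sum_le_tsum A (fun i _ => div_nonneg (hlam_nonneg _) (sq_nonneg _))
        hCshift_sum) hCshift_le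
    have hAnn : 0 ≤ ∑ i ∈ A, Real.sqrt (lam (k + i)) * (Real.sqrt (lam (k + i)) / (lam (k + i) + κδ)) :=
      Finset.sum_nonneg fun i _ => mul_nonneg (Real.sqrt_nonneg _)
        (div_nonneg (Real.sqrt_nonneg _) (hden _).le)
    have hsq : (∑ i ∈ A, Real.sqrt (lam (k + i)) * (Real.sqrt (lam (k + i)) / (lam (k + i) + κδ))) ^ 2
        ≤ tail * C := by
      refine le_trans hcs ?_
      have hA2 : 0 ≤ ∑ i ∈ A, lam (k + i) :=
        Finset.sum_nonneg fun i _ => hlam_nonneg _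
      exact mul_le_mul b1 b2 (Finset.sum_nonneg fun i _ =>
        div_nonneg (hlam_nonneg _) (sq_nonneg _)) htail0
    exact (Real.le_sqrt hAnn (mul_nonneg htail0 hC0)).2 hsq
  have hCS2 : t ^ 2 ≤ tail * C := by
    have h := pow_le_pow_left₀ ht0 hCS 2
    rwa [Real.sq_sqrt (mul_nonneg htail0 hC0)] at h
  -- Nδ lower bound
  have hNδ_ge : Rt / n * C ≤ Nδ := by
    rw [hNδ]
    have h0 : 0 ≤ ∑' i, lam i * v i ^ 2 / (lam i + κδ) ^ 2 :=
      tsum_nonneg fun i => div_nonneg (mul_nonneg (hlam_nonneg i) (sq_nonneg _)) (sq_nonneg _)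
    linarith
  -- combine
  have hmain : (s / n - ε) ^ 2 * Rt ≤ tail * Nδ / n := by
    have h1 : (s / n - ε) ^ 2 ≤ (t / n) ^ 2 := pow_le_pow_left₀ hc.le hkey1 2
    have h2 : (t / n) ^ 2 ≤ tail * C / n ^ 2 := by
      rw [div_pow]
      gcongr
    have h3 : tail * C / n ^ 2 * Rt = tail * (Rt / n * C) / n := by
      field_simp
    have h4 : tail * (Rt / n * C) / n ≤ tail * Nδ / n := by gcongr
    calc (s / n - ε) ^ 2 * Rt ≤ tail * C / n ^ 2 * Rt := by
          exact mul_le_mul_of_nonneg_right (h1.trans h2) hRt0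
      _ = tail * (Rt / n * C) / n := h3
      _ ≤ tail * Nδ / n := h4
  calc (s / n - ε) * Real.sqrt Rt = Real.sqrt ((s / n - ε) ^ 2 * Rt) := by
        rw [Real.sqrt_mul (sq_nonneg _), Real.sqrt_sq hc.le]
    _ ≤ Real.sqrt (tail * Nδ / n) := Real.sqrt_le_sqrt hmain
end

section
/- (Norm bound for the minimal-norm interpolant.) Let l ∈ ℕ ∪ {∞} and let k ≥ 0 be an integer with λ_{k+1} > 0 and R_k > n; assume λ_i > 0 for all i ≤ l and, if l = ∞, that Σ_{i≥1} v_i²/λ_i < ∞. Then the predicted squared RKHS norm of the minimal-norm interpolant, N_0 = Σ_{i≥1} λ_i v_i²/(λ_i + κ_0)² + (R̃_0/n) · Σ_{i≥1} λ_i/(λ_i + κ_0)², satisfies N_0 ≤ Σ_{i≤l} v_i²/λ_i + (1 − n/R_k)^{−1} · n·(σ² + Σ_{i>l} v_i²)/(Σ_{i>k} λ_i). -/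
set_option maxHeartbeats 1000000

/-- Norm bound for the minimal-norm interpolant: For
`l ∈ ℕ ∪ {∞}` and `k ≥ 0` with `λ_{k+1} > 0` and `R_k > n`, assuming
`λ_i > 0` for `i ≤ l` (and summability of `v_i²/λ_i` if `l = ∞`), the
predicted squared RKHS norm `N_0` of the minimal-norm interpolant satisfies
`N_0 ≤ Σ_{i≤l} v_i²/λ_i + (1 − n/R_k)⁻¹ · n·(σ² + Σ_{i>l} v_i²)/(Σ_{i>k} λ_i)`.
(Here `lam i`, `v i` denote `λ_{i+1}`, `v_{i+1}`; the 1-based condition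
`i ≤ l` becomes `(i : ℕ∞) < l` for the 0-based index.) -/
theorem norm_bound_min_norm_interpolant
    (n : ℕ) (hn : 1 ≤ n)
    (lam : ℕ → ℝ) (hlam_nonneg : ∀ i, 0 ≤ lam i) (hlam_mono : Antitone lam)
    (hlam_summable : Summable lam) (hlam_ne : ∃ i, lam i ≠ 0)
    (v : ℕ → ℝ) (hv : Summable fun i => v i ^ 2)
    (σ2 : ℝ) (hσ2 : 0 ≤ σ2)
    (κ0 : ℝ) (hκ0 : 0 < κ0)
    (hκ0_eq : ∑' i, lam i / (lam i + κ0) = (n : ℝ))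
    (E0 : ℝ)
    (hE0 : E0 = (n : ℝ) / ((n : ℝ) - ∑' i, (lam i / (lam i + κ0)) ^ 2))
    (Rt0 : ℝ)
    (hRt0 : Rt0 = E0 * (∑' i, (1 - lam i / (lam i + κ0)) ^ 2 * v i ^ 2 + σ2))
    (N0 : ℝ)
    (hN0 : N0 = ∑' i, lam i * v i ^ 2 / (lam i + κ0) ^ 2
        + Rt0 / n * ∑' i, lam i / (lam i + κ0) ^ 2)
    (l : ℕ∞)
    (hlam_pos_l : ∀ i : ℕ, (i : ℕ∞) < l → 0 < lam i)
    (hl_top : l = ⊤ → Summable fun i => v i ^ 2 / lam i)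
    (k : ℕ) (hlamk : 0 < lam k)
    (Rk : ℝ) (hRk : Rk = (∑' i, lam (k + i)) ^ 2 / ∑' i, lam (k + i) ^ 2)
    (hRkn : (n : ℝ) < Rk) :
    N0 ≤ (∑' i : {i : ℕ // (i : ℕ∞) < l}, v i.1 ^ 2 / lam i.1)
      + (1 - (n : ℝ) / Rk)⁻¹ *
        ((n : ℝ) * (σ2 + ∑' i : {i : ℕ // l ≤ (i : ℕ∞)}, v i.1 ^ 2)
          / ∑' i, lam (k + i)) := by
  classical
  have hnR : (0 : ℝ) < n := by exact_mod_cast Nat.lt_of_lt_of_le Nat.zero_lt_one hn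
  have hpos : ∀ i, 0 < lam i + κ0 := fun i => by linarith [hlam_nonneg i]
  have hL_nonneg : ∀ i, 0 ≤ lam i / (lam i + κ0) := fun i =>
    div_nonneg (hlam_nonneg i) (hpos i).le
  have hL_le_one : ∀ i, lam i / (lam i + κ0) ≤ 1 := fun i =>
    (div_le_one (hpos i)).mpr (by linarith [hlam_nonneg i])
  -- summability facts
  have hSL : Summable (fun i => lam i / (lam i + κ0)) := by
    refine Summable.of_nonneg_of_le hL_nonneg (fun i => ?_) (hlam_summable.div_const κ0)
    exact div_le_div_of_nonneg_left (hlam_nonneg i) hκ0 (by linarith [hlam_nonneg i])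
  have hSL2 : Summable (fun i => (lam i / (lam i + κ0)) ^ 2) := by
    refine Summable.of_nonneg_of_le (fun i => sq_nonneg _) (fun i => ?_) hSL
    nlinarith [hL_nonneg i, hL_le_one i]
  have hSA : Summable (fun i => lam i * v i ^ 2 / (lam i + κ0) ^ 2) := by
    refine Summable.of_nonneg_of_le
      (fun i => div_nonneg (mul_nonneg (hlam_nonneg i) (sq_nonneg _)) (by positivity))
      (fun i => ?_) (hv.div_const κ0)
    rw [div_le_div_iff₀ (pow_pos (hpos i) 2) hκ0]
    nlinarith [mul_nonneg (mul_nonneg (sq_nonneg (v i)) (hlam_nonneg i)) hκ0.le,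
      mul_nonneg (sq_nonneg (v i)) (sq_nonneg (lam i)),
      mul_nonneg (sq_nonneg (v i)) (mul_pos hκ0 hκ0).le]
  have hSC : Summable (fun i => (1 - lam i / (lam i + κ0)) ^ 2 * v i ^ 2) := by
    refine Summable.of_nonneg_of_le
      (fun i => mul_nonneg (sq_nonneg _) (sq_nonneg _)) (fun i => ?_) hv
    nlinarith [mul_nonneg (mul_nonneg (hL_nonneg i)
        (sub_nonneg.mpr (hL_le_one i))) (sq_nonneg (v i)),
      mul_nonneg (hL_nonneg i) (sq_nonneg (v i))]
  have hSB : Summable (fun i => lam i / (lam i + κ0) ^ 2) := by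
    refine Summable.of_nonneg_of_le
      (fun i => div_nonneg (hlam_nonneg i) (by positivity))
      (fun i => ?_) (hlam_summable.div_const (κ0 ^ 2))
    exact div_le_div_of_nonneg_left (hlam_nonneg i) (pow_pos hκ0 2)
      (by nlinarith [hlam_nonneg i])
  have hSv' : Summable (fun i => v i ^ 2 / (lam i + κ0)) := by
    refine Summable.of_nonneg_of_le (fun i => div_nonneg (sq_nonneg _) (hpos i).le)
      (fun i => ?_) (hv.div_const κ0)
    exact div_le_div_of_nonneg_left (sq_nonneg _) hκ0 (by linarith [hlam_nonneg i])
  -- positivity of the denominator in E0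
  have hDpos : 0 < (n : ℝ) - ∑' i, (lam i / (lam i + κ0)) ^ 2 := by
    obtain ⟨i0, hi0⟩ := hlam_ne
    have hl0 : 0 < lam i0 := lt_of_le_of_ne (hlam_nonneg i0) (Ne.symm hi0)
    have hlt : ∑' i, (lam i / (lam i + κ0)) ^ 2 < ∑' i, lam i / (lam i + κ0) := by
      refine Summable.tsum_lt_tsum (i := i0) (fun i => ?_) ?_ hSL2 hSL
      · nlinarith [hL_nonneg i, hL_le_one i]
      · have h1 : 0 < lam i0 / (lam i0 + κ0) := div_pos hl0 (hpos i0)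
        have h2 : lam i0 / (lam i0 + κ0) < 1 := (div_lt_one (hpos i0)).mpr (by linarith)
        nlinarith
    rw [hκ0_eq] at hlt
    linarith
  -- identity for the second sum
  have hB : ∑' i, lam i / (lam i + κ0) ^ 2
      = ((n : ℝ) - ∑' i, (lam i / (lam i + κ0)) ^ 2) / κ0 := by
    have h1 : ∀ i, lam i / (lam i + κ0) ^ 2
        = (lam i / (lam i + κ0) - (lam i / (lam i + κ0)) ^ 2) / κ0 := by
      intro i
      have h := (hpos i).ne'
      field_simp
      ring
    rw [tsum_congr h1, tsum_div_const, Summable.tsum_sub hSL hSL2, hκ0_eq]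
  -- closed form for N0
  have hterm2 : Rt0 / n * ∑' i, lam i / (lam i + κ0) ^ 2
      = (∑' i, (1 - lam i / (lam i + κ0)) ^ 2 * v i ^ 2 + σ2) / κ0 := by
    rw [hB, hRt0, hE0]
    set C := ∑' i, (1 - lam i / (lam i + κ0)) ^ 2 * v i ^ 2 with hC
    set D := (n : ℝ) - ∑' i, (lam i / (lam i + κ0)) ^ 2 with hD
    field_simp [hDpos.ne', hnR.ne']
  have hkey_id : N0 = (∑' i, v i ^ 2 / (lam i + κ0)) + σ2 / κ0 := by
    rw [hN0, hterm2]
    have h2 : ∑' i, lam i * v i ^ 2 / (lam i + κ0) ^ 2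
        + (∑' i, (1 - lam i / (lam i + κ0)) ^ 2 * v i ^ 2) / κ0
        = ∑' i, v i ^ 2 / (lam i + κ0) := by
      rw [← tsum_div_const, ← Summable.tsum_add hSA (hSC.div_const κ0)]
      refine tsum_congr fun i => ?_
      have h := (hpos i).ne'
      field_simp
      ring
    rw [add_div, ← add_assoc, h2]
  -- split the sum at l
  have hsum1 : Summable ((fun i => v i ^ 2 / (lam i + κ0))
      ∘ (Subtype.val : {i : ℕ | (i : ℕ∞) < l} → ℕ)) :=
    hSv'.subtype _
  have hsum2 : Summable ((fun i => v i ^ 2 / (lam i + κ0))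
      ∘ (Subtype.val : ↥{i : ℕ | (i : ℕ∞) < l}ᶜ → ℕ)) :=
    hSv'.subtype _
  have hsplit : (∑' i, v i ^ 2 / (lam i + κ0))
      = (∑' i : ↥{i : ℕ | (i : ℕ∞) < l}, v i.1 ^ 2 / (lam i.1 + κ0))
        + ∑' i : ↥{i : ℕ | (i : ℕ∞) < l}ᶜ, v i.1 ^ 2 / (lam i.1 + κ0) :=
    (Summable.tsum_add_tsum_compl hsum1 hsum2).symm
  -- first part
  have hb1 : (∑' i : ↥{i : ℕ | (i : ℕ∞) < l}, v i.1 ^ 2 / (lam i.1 + κ0))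
      ≤ ∑' i : {i : ℕ // (i : ℕ∞) < l}, v i.1 ^ 2 / lam i.1 := by
    have hsummR : Summable (fun i : ↥{i : ℕ | (i : ℕ∞) < l} => v i.1 ^ 2 / lam i.1) := by
      rcases eq_or_ne l ⊤ with rfl | hlt
      · exact (hl_top rfl).subtype _
      · obtain ⟨m, hm⟩ := WithTop.ne_top_iff_exists.mp hlt
        have hfin : ({i : ℕ | (i : ℕ∞) < l}).Finite := by
          refine Set.Finite.subset (Set.finite_Iio m) (fun i hi => ?_)
          have h1 : (i : ℕ∞) < l := hi
          rw [← hm] at h1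
          simp only [Set.mem_Iio]
          exact ENat.coe_lt_coe.mp h1
        exact hfin.summable (fun i => v i ^ 2 / lam i)
    have h1 : ∀ i : ↥{i : ℕ | (i : ℕ∞) < l},
        v i.1 ^ 2 / (lam i.1 + κ0) ≤ v i.1 ^ 2 / lam i.1 := fun i =>
      div_le_div_of_nonneg_left (sq_nonneg _) (hlam_pos_l i.1 i.2) (by linarith [hκ0])
    exact Summable.tsum_le_tsum h1 hsum1 hsummR
  -- second part
  set Vt : ℝ := ∑' i : {i : ℕ // l ≤ (i : ℕ∞)}, v i.1 ^ 2 with hVt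
  have hVt0 : 0 ≤ Vt := tsum_nonneg (fun i => sq_nonneg _)
  have hb2 : (∑' i : ↥{i : ℕ | (i : ℕ∞) < l}ᶜ, v i.1 ^ 2 / (lam i.1 + κ0)) ≤ Vt / κ0 := by
    have he : Vt = ∑' i : ↥{i : ℕ | (i : ℕ∞) < l}ᶜ, v i.1 ^ 2 := by
      rw [hVt]
      exact (Equiv.subtypeEquivRight (fun i => by
        simp [Set.mem_compl_iff, Set.mem_setOf_eq, not_lt])).tsum_eq
        (fun i : ↥{i : ℕ | (i : ℕ∞) < l}ᶜ => v i.1 ^ 2)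
    rw [he, ← tsum_div_const]
    refine Summable.tsum_le_tsum (fun i => ?_) hsum2 ((hv.subtype _).div_const κ0)
    exact div_le_div_of_nonneg_left (sq_nonneg _) hκ0 (by linarith [hlam_nonneg i.1])
  -- tail quantities
  set T : ℝ := ∑' i, lam (k + i) with hT
  set Q : ℝ := ∑' i, lam (k + i) ^ 2 with hQ
  have hTsum : Summable (fun i => lam (k + i)) :=
    hlam_summable.comp_injective (add_right_injective k)
  have hQsum : Summable (fun i => lam (k + i) ^ 2) := by
    refine Summable.of_nonneg_of_le (fun i => sq_nonneg _) (fun i => ?_)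
      (hTsum.mul_left (lam 0))
    have h1 : lam (k + i) ≤ lam 0 := hlam_mono (Nat.zero_le _)
    rw [pow_two]
    exact mul_le_mul_of_nonneg_right h1 (hlam_nonneg _)
  have hTpos : 0 < T := by
    have h := Summable.le_tsum hTsum 0 (fun j _ => hlam_nonneg _)
    simp only [Nat.add_zero] at h
    rw [← hT] at h
    exact lt_of_lt_of_le hlamk h
  have hQpos : 0 < Q := by
    have h := Summable.le_tsum hQsum 0 (fun j _ => sq_nonneg _)
    simp only [Nat.add_zero] at h
    rw [← hQ] at h
    exact lt_of_lt_of_le (pow_pos hlamk 2) h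
  have hLtail : Summable (fun j => lam (k + j) / (lam (k + j) + κ0)) :=
    hSL.comp_injective (add_right_injective k)
  have hn_tail : ∑' j, lam (k + j) / (lam (k + j) + κ0) ≤ (n : ℝ) := by
    rw [← hκ0_eq]
    exact Summable.tsum_le_tsum_of_inj (fun j => k + j) (add_right_injective k)
      (fun c _ => hL_nonneg c) (fun j => le_refl _) hLtail hSL
  -- tangent-line bound giving the key inequality
  set μ : ℝ := Q / T with hμ
  have hμ0 : 0 ≤ μ := div_nonneg hQpos.le hTpos.le
  have hμκ : 0 < μ + κ0 := by linarith
  have htan : ∀ j, ((2 * μ + κ0) * lam (k + j) - lam (k + j) ^ 2) / (μ + κ0) ^ 2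
      ≤ lam (k + j) / (lam (k + j) + κ0) := by
    intro j
    rw [div_le_div_iff₀ (pow_pos hμκ 2) (hpos (k + j))]
    nlinarith [mul_nonneg (hlam_nonneg (k + j)) (sq_nonneg (μ - lam (k + j)))]
  have htansum : Summable
      (fun j => ((2 * μ + κ0) * lam (k + j) - lam (k + j) ^ 2) / (μ + κ0) ^ 2) :=
    ((hTsum.mul_left _).sub hQsum).div_const _
  have h3 : 0 < Q + T * κ0 := add_pos hQpos (mul_pos hTpos hκ0)
  have htantsum : ∑' j, ((2 * μ + κ0) * lam (k + j) - lam (k + j) ^ 2) / (μ + κ0) ^ 2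
      = ((2 * μ + κ0) * T - Q) / (μ + κ0) ^ 2 := by
    rw [tsum_div_const, Summable.tsum_sub (hTsum.mul_left _) hQsum, tsum_mul_left, ← hT, ← hQ]
  have hkey : T ^ 2 ≤ (n : ℝ) * (Q + T * κ0) := by
    have h1 : T ^ 2 / (Q + T * κ0) = ((2 * μ + κ0) * T - Q) / (μ + κ0) ^ 2 := by
      rw [hμ]
      field_simp
      ring
    have h2 : T ^ 2 / (Q + T * κ0) ≤ (n : ℝ) := by
      rw [h1, ← htantsum]
      exact le_trans (Summable.tsum_le_tsum htan htansum hLtail) hn_tail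
    rwa [div_le_iff₀ h3] at h2
  -- final fraction bound
  have hRkpos : (0 : ℝ) < Rk := lt_trans hnR hRkn
  have h1n : 0 < 1 - (n : ℝ) / Rk := by
    rw [sub_pos]
    exact (div_lt_one hRkpos).mpr hRkn
  have hb3 : (σ2 + Vt) / κ0 ≤ (1 - (n : ℝ) / Rk)⁻¹ * ((n : ℝ) * (σ2 + Vt) / T) := by
    have hfrac : (1 - (n : ℝ) / Rk) * T ≤ (n : ℝ) * κ0 := by
      have hv1 : (1 - (n : ℝ) / Rk) * T = T - (n : ℝ) * Q / T := by
        rw [hRk]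
        field_simp
      have h5 : (T - (n : ℝ) * Q / T) * T ≤ (n : ℝ) * κ0 * T := by
        have h6 : (T - (n : ℝ) * Q / T) * T = T ^ 2 - (n : ℝ) * Q := by
          field_simp
        rw [h6]
        nlinarith [hkey]
      rw [hv1]
      exact le_of_mul_le_mul_right h5 hTpos
    rw [inv_mul_eq_div, le_div_iff₀ h1n, div_mul_eq_mul_div, div_le_div_iff₀ hκ0 hTpos]
    nlinarith [mul_le_mul_of_nonneg_left hfrac (by linarith : (0:ℝ) ≤ σ2 + Vt)]
  -- put everything together
  have hdiv : σ2 / κ0 + Vt / κ0 = (σ2 + Vt) / κ0 := (add_div σ2 Vt κ0).symm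
  rw [hkey_id, hsplit]
  linarith [hb1, hb2, hb3]
end

section
/- (Risk bound for the minimal-norm interpolant.) Let l ∈ ℕ ∪ {∞} and let k ≥ 0 be an integer with (k/n)² + 2(k/n) < 1, λ_{k+1} > 0 and R_k > n; assume λ_i > 0 for all i ≤ l and, if l = ∞, that Σ_{i≥1} v_i²/λ_i < ∞. Set ε = √((k² + 2kn)/n²). Then the ridgeless omniscient risk estimate satisfies (1 − ε)² · R̃_0 ≤ (Σ_{i>k} λ_i)·(Σ_{i≤l} v_i²/λ_i)/n + (1 − n/R_k)^{−1} · (σ² + Σ_{i>l} v_i²). -/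
private lemma tsum_cs (f g : ℕ → ℝ) (hf : ∀ i, 0 ≤ f i) (hg : ∀ i, 0 ≤ g i)
    (hf2 : Summable fun i => f i ^ 2) (hg2 : Summable fun i => g i ^ 2) :
    (∑' i, f i * g i) ^ 2 ≤ (∑' i, f i ^ 2) * (∑' i, g i ^ 2) := by
  have hfg : Summable fun i => f i * g i := by
    apply Summable.of_nonneg_of_le (fun i => mul_nonneg (hf i) (hg i))
      (fun i => ?_) ((hf2.add hg2).div_const 2)
    nlinarith [sq_nonneg (f i - g i)]
  have hA : 0 ≤ ∑' i, f i ^ 2 := tsum_nonneg fun i => sq_nonneg _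
  have hB : 0 ≤ ∑' i, g i ^ 2 := tsum_nonneg fun i => sq_nonneg _
  have key : ∑' i, f i * g i ≤ Real.sqrt ((∑' i, f i ^ 2) * (∑' i, g i ^ 2)) := by
    apply Summable.tsum_le_of_sum_le hfg
    intro s
    have h1 : (∑ i ∈ s, f i * g i) ^ 2 ≤ (∑ i ∈ s, f i ^ 2) * ∑ i ∈ s, g i ^ 2 :=
      Finset.sum_mul_sq_le_sq_mul_sq s f g
    have h2 : (∑ i ∈ s, f i ^ 2) * ∑ i ∈ s, g i ^ 2 ≤ (∑' i, f i ^ 2) * (∑' i, g i ^ 2) := by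
      have e1 : (∑ i ∈ s, f i ^ 2) ≤ ∑' i, f i ^ 2 := Summable.sum_le_tsum s (fun i _ => sq_nonneg _) hf2
      have e2 : (∑ i ∈ s, g i ^ 2) ≤ ∑' i, g i ^ 2 := Summable.sum_le_tsum s (fun i _ => sq_nonneg _) hg2
      have e3 : 0 ≤ ∑ i ∈ s, f i ^ 2 := Finset.sum_nonneg fun i _ => sq_nonneg _
      have e4 : 0 ≤ ∑ i ∈ s, g i ^ 2 := Finset.sum_nonneg fun i _ => sq_nonneg _
      nlinarith
    have h0 : 0 ≤ ∑ i ∈ s, f i * g i := Finset.sum_nonneg fun i _ => mul_nonneg (hf i) (hg i)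
    rw [show ∑ i ∈ s, f i * g i = Real.sqrt ((∑ i ∈ s, f i * g i)^2) from (Real.sqrt_sq h0).symm]
    exact Real.sqrt_le_sqrt (h1.trans h2)
  have h0' : 0 ≤ ∑' i, f i * g i := tsum_nonneg fun i => mul_nonneg (hf i) (hg i)
  calc (∑' i, f i * g i) ^ 2 ≤ Real.sqrt ((∑' i, f i ^ 2) * (∑' i, g i ^ 2)) ^ 2 := by
        exact pow_le_pow_left₀ h0' key 2
    _ = (∑' i, f i ^ 2) * (∑' i, g i ^ 2) := Real.sq_sqrt (mul_nonneg hA hB)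


private lemma weighted_rank (w : ℕ → ℝ) (κ : ℝ) (hκ : 0 < κ) (hw : ∀ i, 0 ≤ w i)
    (hsum : Summable w) (hsum2 : Summable fun i => w i ^ 2) :
    (∑' i, w i) ^ 2 * ∑' i, (w i / (w i + κ)) ^ 2
      ≤ (∑' i, w i / (w i + κ)) ^ 2 * ∑' i, w i ^ 2 := by
  have hden : ∀ i, 0 < w i + κ := fun i => by linarith [hw i]
  set a : ℕ → ℝ := fun i => w i / (w i + κ) with ha_def
  have ha0 : ∀ i, 0 ≤ a i := fun i => div_nonneg (hw i) (hden i).le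
  have ha1 : ∀ i, a i ≤ 1 := fun i => by
    rw [ha_def, div_le_one (hden i)]; linarith
  have haw : ∀ i, a i ≤ w i / κ := fun i =>
    div_le_div_of_nonneg_left (hw i) hκ (by linarith [hw i])
  have hsa : Summable a :=
    Summable.of_nonneg_of_le ha0 haw (hsum.div_const κ)
  have hsa2 : Summable fun i => a i ^ 2 :=
    Summable.of_nonneg_of_le (fun i => sq_nonneg _)
      (fun i => by nlinarith [ha0 i, ha1 i]) hsa
  set T := ∑' i, w i with hT_def
  set S := ∑' i, w i ^ 2 with hS_def
  set A := ∑' i, a i with hA_def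
  have hT0 : 0 ≤ T := tsum_nonneg fun i => hw i
  have hS0 : 0 ≤ S := tsum_nonneg fun i => sq_nonneg _
  have hA0 : 0 ≤ A := tsum_nonneg ha0
  have hsaA : 0 ≤ ∑' i, a i ^ 2 := tsum_nonneg fun i => sq_nonneg _
  rcases eq_or_lt_of_le hA0 with hA | hApos
  · -- A = 0 : all a i = 0
    have hzero : ∀ i, a i = 0 := by
      intro i
      have h1 : a i ≤ A := Summable.le_tsum hsa i fun j _ => ha0 j
      have := ha0 i; linarith [hA.symm ▸ h1]
    have : (∑' i, a i ^ 2) = 0 := by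
      rw [show (fun i => a i ^ 2) = fun _ => (0:ℝ) from funext fun i => by rw [hzero i]; ring]
      exact tsum_zero
    rw [this]
    nlinarith
  · -- A > 0
    set τ : ℝ := T / A - κ with hτ_def
    set t : ℝ := max τ 0 with ht_def
    have ht0 : 0 ≤ t := le_max_right _ _
    have htκ : 0 < t + κ := by linarith
    set c : ℝ := t * A + t / (t + κ) * T with hc_def
    set d : ℕ → ℝ := fun i => w i * A - a i * T with hd_def
    set s : ℕ → ℝ := fun i => w i * A + a i * T with hs_def
    have hwa : ∀ i, a i * (w i + κ) = w i := fun i => div_mul_cancel₀ _ (hden i).ne'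
    have hd_eq : ∀ i, d i = a i * A * (w i - τ) := by
      intro i
      have h1 : A * (T / A) = T := mul_div_cancel₀ T hApos.ne'
      have : a i * A * (w i - τ) = (a i * (w i + κ)) * A - a i * (A * (T / A)) := by
        rw [hτ_def]; ring
      rw [this, hwa i, h1, hd_def]
    have hsc_eq : ∀ i, s i - c = (w i - t) * (A + κ * T / ((w i + κ) * (t + κ))) := by
      intro i
      have h2 : a i - t / (t + κ) = κ * (w i - t) / ((w i + κ) * (t + κ)) := by
        show w i / (w i + κ) - t / (t + κ) = _
        rw [div_sub_div _ _ (hden i).ne' htκ.ne',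
          show w i * (t + κ) - (w i + κ) * t = κ * (w i - t) by ring]
      calc s i - c = (w i - t) * A + (a i - t / (t + κ)) * T := by rw [hs_def, hc_def]; ring
        _ = (w i - t) * A + (κ * (w i - t) / ((w i + κ) * (t + κ))) * T := by rw [h2]
        _ = (w i - t) * (A + κ * T / ((w i + κ) * (t + κ))) := by ring
    have hpt : ∀ i, 0 ≤ d i * (s i - c) := by
      intro i
      rw [hd_eq i, hsc_eq i]
      have hb : 0 ≤ A + κ * T / ((w i + κ) * (t + κ)) := by
        have := div_nonneg (mul_nonneg hκ.le hT0) (mul_nonneg (hden i).le htκ.le)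
        linarith
      have hsign : 0 ≤ (w i - τ) * (w i - t) := by
        rcases le_or_gt τ 0 with h | h
        · have : t = 0 := max_eq_right h
          rw [this]
          exact mul_nonneg (by linarith [hw i]) (by linarith [hw i])
        · have : t = τ := max_eq_left h.le
          rw [this]
          exact mul_self_nonneg _
      calc (0:ℝ) ≤ (a i * A) * ((w i - τ) * (w i - t)) * (A + κ * T / ((w i + κ) * (t + κ))) := by
            apply mul_nonneg (mul_nonneg (mul_nonneg (ha0 i) hA0) hsign) hb
        _ = a i * A * (w i - τ) * ((w i - t) * (A + κ * T / ((w i + κ) * (t + κ)))) := by ring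
    -- summability of pieces
    have hsd : Summable d := (hsum.mul_right A).sub (hsa.mul_right T)
    have hF : Summable fun i => w i ^ 2 * A ^ 2 - a i ^ 2 * T ^ 2 - c * d i :=
      ((hsum2.mul_right (A^2)).sub (hsa2.mul_right (T^2))).sub (hsd.mul_left c)
    have hFd : ∀ i, w i ^ 2 * A ^ 2 - a i ^ 2 * T ^ 2 - c * d i = d i * (s i - c) := by
      intro i; rw [hd_def, hs_def]; ring
    have hsum_d : ∑' i, d i = 0 := by
      rw [hd_def]
      rw [Summable.tsum_sub (hsum.mul_right A) (hsa.mul_right T), tsum_mul_right, tsum_mul_right]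
      rw [← hT_def, ← hA_def]; ring
    have hnn : 0 ≤ ∑' i, (w i ^ 2 * A ^ 2 - a i ^ 2 * T ^ 2 - c * d i) :=
      tsum_nonneg fun i => (hFd i) ▸ hpt i
    have hval : ∑' i, (w i ^ 2 * A ^ 2 - a i ^ 2 * T ^ 2 - c * d i)
        = S * A ^ 2 - (∑' i, a i ^ 2) * T ^ 2 - c * 0 := by
      rw [Summable.tsum_sub ((hsum2.mul_right (A^2)).sub (hsa2.mul_right (T^2))) (hsd.mul_left c)]
      rw [Summable.tsum_sub (hsum2.mul_right (A^2)) (hsa2.mul_right (T^2))]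
      rw [tsum_mul_right, tsum_mul_right, tsum_mul_left, hsum_d, ← hS_def]
    rw [hval] at hnn
    nlinarith


private lemma alg_keyA (n k A ρ ε : ℝ) (hn : 0 < n) (hk : 0 ≤ k) (hkn : k < n)
    (hA1 : n - k ≤ A) (hA2 : A ≤ n) (hρ0 : 0 ≤ ρ) (hρ1 : ρ ≤ 1)
    (hε0 : 0 ≤ ε) (hε1 : ε ≤ 1) (hεB : (1 - ε) ^ 2 * n ≤ n - k) :
    (1 - ε) ^ 2 * (1 - ρ) * n ≤ A - A ^ 2 * ρ / n := by
  have hsq1 : (1 - ε) ^ 2 ≤ 1 := by nlinarith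
  have key : (1 - ε) ^ 2 * (1 - ρ) * n * n ≤ A * n - A ^ 2 * ρ := by
    rcases eq_or_lt_of_le hk with hk0 | hk0
    · have hAn : A = n := le_antisymm hA2 (by linarith)
      rw [hAn]; nlinarith [mul_nonneg (mul_nonneg (by linarith : (0:ℝ) ≤ 1 - (1 - ε) ^ 2) (by linarith : (0:ℝ) ≤ 1 - ρ)) (mul_nonneg hn.le hn.le)]
    · have E1 : 0 ≤ n ^ 2 * (1 - ρ) - (1 - ε) ^ 2 * (1 - ρ) * n * n := by nlinarith [mul_nonneg (mul_nonneg (by linarith : (0:ℝ) ≤ 1 - (1 - ε) ^ 2) (by linarith : (0:ℝ) ≤ 1 - ρ)) (mul_nonneg hn.le hn.le)]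
      have E2 : 0 ≤ n * (n - k) - (n - k) ^ 2 * ρ - (1 - ε) ^ 2 * (1 - ρ) * n * n := by
        nlinarith [mul_nonneg (mul_nonneg hρ0 (by linarith : (0:ℝ) ≤ n - k)) hk,
          mul_le_mul_of_nonneg_right hεB (mul_nonneg (by linarith : (0:ℝ) ≤ 1 - ρ) hn.le)]
      nlinarith [mul_nonneg (sub_nonneg.2 hA2) E2, mul_nonneg (by linarith : (0:ℝ) ≤ A - (n - k)) E1,
        mul_nonneg (mul_nonneg hk0.le hρ0)
          (mul_nonneg (by linarith : (0:ℝ) ≤ A - (n - k)) (sub_nonneg.2 hA2))]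
  have h4 : A - A ^ 2 * ρ / n = (A * n - A ^ 2 * ρ) / n := by field_simp
  rw [h4, le_div_iff₀ hn]
  linarith

set_option maxHeartbeats 2000000 in
/-- Risk bound for the minimal-norm interpolant: For
`l ∈ ℕ ∪ {∞}` and `k ≥ 0` with `(k/n)² + 2(k/n) < 1`, `λ_{k+1} > 0` and
`R_k > n`, assuming `λ_i > 0` for `i ≤ l` (and summability of `v_i²/λ_i` if
`l = ∞`), with `ε = √((k² + 2kn)/n²)` the ridgeless omniscient risk estimate
satisfies
`(1 − ε)²·R̃_0 ≤ (Σ_{i>k} λ_i)·(Σ_{i≤l} v_i²/λ_i)/n + (1 − n/R_k)⁻¹·(σ² + Σ_{i>l} v_i²)`.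
(Here `lam i`, `v i` denote `λ_{i+1}`, `v_{i+1}`; the 1-based condition
`i ≤ l` becomes `(i : ℕ∞) < l` for the 0-based index.) -/
theorem risk_bound_min_norm_interpolant
    (n : ℕ) (hn : 1 ≤ n)
    (lam : ℕ → ℝ) (hlam_nonneg : ∀ i, 0 ≤ lam i) (hlam_mono : Antitone lam)
    (hlam_summable : Summable lam) (hlam_ne : ∃ i, lam i ≠ 0)
    (v : ℕ → ℝ) (hv : Summable fun i => v i ^ 2)
    (σ2 : ℝ) (hσ2 : 0 ≤ σ2)
    (κ0 : ℝ) (hκ0 : 0 < κ0)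
    (hκ0_eq : ∑' i, lam i / (lam i + κ0) = (n : ℝ))
    (E0 : ℝ)
    (hE0 : E0 = (n : ℝ) / ((n : ℝ) - ∑' i, (lam i / (lam i + κ0)) ^ 2))
    (Rt0 : ℝ)
    (hRt0 : Rt0 = E0 * (∑' i, (1 - lam i / (lam i + κ0)) ^ 2 * v i ^ 2 + σ2))
    (l : ℕ∞)
    (hlam_pos_l : ∀ i : ℕ, (i : ℕ∞) < l → 0 < lam i)
    (hl_top : l = ⊤ → Summable fun i => v i ^ 2 / lam i)
    (k : ℕ) (hlamk : 0 < lam k)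
    (hkn : ((k : ℝ) / n) ^ 2 + 2 * ((k : ℝ) / n) < 1)
    (Rk : ℝ) (hRk : Rk = (∑' i, lam (k + i)) ^ 2 / ∑' i, lam (k + i) ^ 2)
    (hRkn : (n : ℝ) < Rk)
    (ε : ℝ) (hε : ε = Real.sqrt (((k : ℝ) ^ 2 + 2 * k * n) / (n : ℝ) ^ 2)) :
    (1 - ε) ^ 2 * Rt0
      ≤ (∑' i, lam (k + i)) * (∑' i : {i : ℕ // (i : ℕ∞) < l}, v i.1 ^ 2 / lam i.1) / n
        + (1 - (n : ℝ) / Rk)⁻¹ * (σ2 + ∑' i : {i : ℕ // l ≤ (i : ℕ∞)}, v i.1 ^ 2) := by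
  subst hE0
  subst hRt0
  have hnR : (0:ℝ) < n := by exact_mod_cast hn
  have hkR0 : (0:ℝ) ≤ k := Nat.cast_nonneg k
  -- basic k/n facts
  have hx0 : (0:ℝ) ≤ (k:ℝ)/n := div_nonneg hkR0 hnR.le
  have hxlt : (k:ℝ)/n < 1/2 := by nlinarith [hkn, hx0]
  have h2k : 2*(k:ℝ) < n := by
    have := (div_lt_iff₀ hnR).mp hxlt; linarith
  have hklt : (k:ℝ) < n := by linarith
  -- ε facts
  have hε0 : 0 ≤ ε := hε ▸ Real.sqrt_nonneg _
  have hεsq : ε^2 = ((k:ℝ)^2 + 2*k*n)/(n:ℝ)^2 := by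
    rw [hε]; exact Real.sq_sqrt (by positivity)
  have hεsq' : (n:ℝ)^2*ε^2 = (k:ℝ)^2 + 2*(k:ℝ)*n := by
    rw [hεsq]; field_simp
  have hkn' : (k:ℝ)^2 + 2*(k:ℝ)*n < (n:ℝ)^2 := by
    have e : ((k:ℝ)/n)^2 + 2*((k:ℝ)/n) = ((k:ℝ)^2+2*(k:ℝ)*n)/(n:ℝ)^2 := by
      field_simp
    rw [e, div_lt_one (by positivity)] at hkn
    exact hkn
  have hε2lt : ε^2 < 1 := by
    rw [hεsq, div_lt_one (by positivity)]
    exact hkn'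
  have hεlt1 : ε < 1 := by nlinarith [hε2lt, hε0]
  have hεk : (k:ℝ) ≤ (n:ℝ)*ε := by
    have hsum0 : (0:ℝ) ≤ (k:ℝ) + (n:ℝ)*ε := by positivity
    nlinarith [hεsq', mul_nonneg hkR0 hnR.le]
  have hεB : (1-ε)^2*(n:ℝ) ≤ (n:ℝ) - k := by
    have h3 : 3*(k:ℝ)*n + (k:ℝ)^2 ≤ 2*ε*(n:ℝ)^2 := by
      have hq : (2*ε*(n:ℝ)^2)^2 = 4*(n:ℝ)^2*((k:ℝ)^2+2*(k:ℝ)*n) := by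
        rw [show (2*ε*(n:ℝ)^2)^2 = 4*(n:ℝ)^2*((n:ℝ)^2*ε^2) from by ring, hεsq']
      have hb0 : (0:ℝ) ≤ 2*ε*(n:ℝ)^2 := by positivity
      have ha0 : (0:ℝ) ≤ 3*(k:ℝ)*n + (k:ℝ)^2 := by positivity
      have hdecomp : 4*(n:ℝ)^2*((k:ℝ)^2+2*(k:ℝ)*n) - (3*(k:ℝ)*n+(k:ℝ)^2)^2
          = (k:ℝ)*(8*(n:ℝ)^2*((n:ℝ)-2*k) + 11*(k:ℝ)*n*((n:ℝ)-2*k)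
            + 16*(k:ℝ)^2*((n:ℝ)-2*k) + 31*(k:ℝ)^3) := by ring
      have hpos : 0 ≤ (k:ℝ)*(8*(n:ℝ)^2*((n:ℝ)-2*k) + 11*(k:ℝ)*n*((n:ℝ)-2*k)
            + 16*(k:ℝ)^2*((n:ℝ)-2*k) + 31*(k:ℝ)^3) := by
        have h2k' : (0:ℝ) ≤ (n:ℝ) - 2*k := by linarith
        have t1 : (0:ℝ) ≤ 8*(n:ℝ)^2*((n:ℝ)-2*k) := by positivity
        have t2 : (0:ℝ) ≤ 11*(k:ℝ)*n*((n:ℝ)-2*k) := by positivity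
        have t3 : (0:ℝ) ≤ 16*(k:ℝ)^2*((n:ℝ)-2*k) := by positivity
        have t4 : (0:ℝ) ≤ 31*(k:ℝ)^3 := by positivity
        have := add_nonneg (add_nonneg (add_nonneg t1 t2) t3) t4
        exact mul_nonneg hkR0 this
      have hsqle : (3*(k:ℝ)*n + (k:ℝ)^2)^2 ≤ (2*ε*(n:ℝ)^2)^2 := by
        rw [hq]; linarith
      exact (pow_le_pow_iff_left₀ ha0 hb0 two_ne_zero).mp hsqle
    have e : (1-ε)^2*(n:ℝ)*(n:ℝ) = (n:ℝ)^2 - 2*ε*(n:ℝ)^2 + ((k:ℝ)^2+2*(k:ℝ)*n) := by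
      rw [← hεsq']; ring
    have h4 : (1-ε)^2*(n:ℝ)*(n:ℝ) ≤ ((n:ℝ)-k)*(n:ℝ) := by rw [e]; nlinarith [h3]
    exact le_of_mul_le_mul_right h4 hnR
  -- learnability facts
  have hdenom : ∀ i, 0 < lam i + κ0 := fun i => by linarith [hlam_nonneg i]
  have hL0 : ∀ i, 0 ≤ lam i/(lam i+κ0) := fun i => div_nonneg (hlam_nonneg i) (hdenom i).le
  have hL1 : ∀ i, lam i/(lam i+κ0) ≤ 1 := fun i => by
    rw [div_le_one (hdenom i)]; linarith [hκ0]
  have hLle : ∀ i, lam i/(lam i+κ0) ≤ lam i/κ0 := fun i =>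
    div_le_div_of_nonneg_left (hlam_nonneg i) hκ0 (by linarith [hlam_nonneg i])
  have sumL : Summable (fun i => lam i/(lam i+κ0)) :=
    Summable.of_nonneg_of_le hL0 hLle (hlam_summable.div_const κ0)
  have sumL2 : Summable (fun i => (lam i/(lam i+κ0))^2) :=
    Summable.of_nonneg_of_le (fun i => sq_nonneg _)
      (fun i => pow_le_of_le_one (hL0 i) (hL1 i) two_ne_zero) sumL
  -- tail summabilities
  have tail_conv : ∀ (f : ℕ → ℝ), Summable f → Summable (fun i => f (k+i)) := by
    intro f hf
    exact ((summable_nat_add_iff k).mpr hf).congr (fun i => by rw [add_comm])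
  have sumTl : Summable (fun i => lam (k+i)) := tail_conv _ hlam_summable
  have sumTl2 : Summable (fun i => lam (k+i)^2) := tail_conv (fun i => lam i^2) <| by
    apply Summable.of_nonneg_of_le (fun i => sq_nonneg _) (fun i => ?_)
      (hlam_summable.mul_left (lam 0))
    have h := hlam_mono (Nat.zero_le i)
    nlinarith only [h, hlam_nonneg i]
  have sumLl : Summable (fun i => lam (k+i)/(lam (k+i)+κ0)) :=
    tail_conv (fun i => lam i/(lam i+κ0)) sumL
  have sumLl2 : Summable (fun i => (lam (k+i)/(lam (k+i)+κ0))^2) :=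
    tail_conv (fun i => (lam i/(lam i+κ0))^2) sumL2
  set T := ∑' i, lam (k+i) with hT_def
  set S := ∑' i, lam (k+i)^2 with hS_def
  have hTpos : 0 < T := by
    have h := Summable.le_tsum sumTl 0 (fun j _ => hlam_nonneg _)
    simp only [Nat.add_zero] at h
    exact lt_of_lt_of_le hlamk h
  have hSpos : 0 < S := by
    have h := Summable.le_tsum sumTl2 0 (fun j _ => sq_nonneg _)
    simp only [Nat.add_zero] at h
    exact lt_of_lt_of_le (pow_pos hlamk 2) h
  -- head-tail split of learnabilities
  set A := ∑' i, lam (k+i)/(lam (k+i)+κ0) with hA_def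
  have hsplitL : ∑ i ∈ Finset.range k, lam i/(lam i+κ0) + A = (n:ℝ) := by
    have h := Summable.sum_add_tsum_nat_add (f := fun i => lam i/(lam i+κ0)) k sumL
    rw [hκ0_eq] at h
    rw [← h, hA_def]
    congr 1
    exact tsum_congr fun i => by rw [add_comm]
  have hhead0 : 0 ≤ ∑ i ∈ Finset.range k, lam i/(lam i+κ0) :=
    Finset.sum_nonneg fun i _ => hL0 i
  have hheadk : ∑ i ∈ Finset.range k, lam i/(lam i+κ0) ≤ k := by
    calc ∑ i ∈ Finset.range k, lam i/(lam i+κ0) ≤ ∑ _i ∈ Finset.range k, (1:ℝ) :=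
          Finset.sum_le_sum fun i _ => hL1 i
      _ = k := by simp
  have hA_le : A ≤ (n:ℝ) := by linarith
  have hA_ge : (n:ℝ) - k ≤ A := by linarith
  have hA0 : 0 ≤ A := by linarith
  -- Cauchy-Schwarz lower bound for D via Q
  set Q := ∑' i, lam (k+i)/(lam (k+i)+κ0)^2 with hQ_def
  have sumQ : Summable (fun i => lam (k+i)/(lam (k+i)+κ0)^2) := by
    apply Summable.of_nonneg_of_le
      (fun i => div_nonneg (hlam_nonneg _) (sq_nonneg _))
      (fun i => ?_) (sumTl.div_const (κ0^2))
    apply div_le_div_of_nonneg_left (hlam_nonneg _) (by positivity)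
    nlinarith only [mul_nonneg (hlam_nonneg (k+i)) hκ0.le, sq_nonneg (lam (k+i))]
  have hCS : A^2 ≤ T * Q := by
    have hf2 : Summable (fun i => Real.sqrt (lam (k+i)) ^ 2) :=
      sumTl.congr (fun i => (Real.sq_sqrt (hlam_nonneg _)).symm)
    have hg2 : Summable (fun i => (Real.sqrt (lam (k+i))/(lam (k+i)+κ0)) ^ 2) := by
      apply sumQ.congr (fun i => ?_)
      rw [div_pow, Real.sq_sqrt (hlam_nonneg _)]
    have h := tsum_cs (fun i => Real.sqrt (lam (k+i)))
      (fun i => Real.sqrt (lam (k+i))/(lam (k+i)+κ0))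
      (fun i => Real.sqrt_nonneg _)
      (fun i => div_nonneg (Real.sqrt_nonneg _) (hdenom _).le) hf2 hg2
    have e1 : (∑' i, Real.sqrt (lam (k+i)) * (Real.sqrt (lam (k+i))/(lam (k+i)+κ0))) = A := by
      rw [hA_def]
      exact tsum_congr fun i => by
        rw [mul_div_assoc', Real.mul_self_sqrt (hlam_nonneg _)]
    have e2 : (∑' i, Real.sqrt (lam (k+i)) ^ 2) = T := by
      rw [hT_def]; exact tsum_congr fun i => Real.sq_sqrt (hlam_nonneg _)
    have e3 : (∑' i, (Real.sqrt (lam (k+i))/(lam (k+i)+κ0)) ^ 2) = Q := by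
      rw [hQ_def]
      exact tsum_congr fun i => by rw [div_pow, Real.sq_sqrt (hlam_nonneg _)]
    rw [e1, e2, e3] at h
    exact h
  -- D and its lower bounds
  set D := (n:ℝ) - ∑' i, (lam i / (lam i + κ0)) ^ 2 with hD_def
  have sumLL2 : Summable (fun i => lam i/(lam i+κ0) - (lam i/(lam i+κ0))^2) := sumL.sub sumL2
  have hDL : D = ∑' i, (lam i/(lam i+κ0) - (lam i/(lam i+κ0))^2) := by
    rw [Summable.tsum_sub sumL sumL2, hκ0_eq, hD_def]
  have hQD : κ0 * Q ≤ D := by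
    have key : ∀ x:ℝ, 0 ≤ x → κ0*(x/(x+κ0)^2) = x/(x+κ0) - (x/(x+κ0))^2 := by
      intro x hx
      have h : x + κ0 ≠ 0 := by positivity
      field_simp
      ring
    have e1 : κ0 * Q = ∑' i, (lam (k+i)/(lam (k+i)+κ0) - (lam (k+i)/(lam (k+i)+κ0))^2) := by
      rw [hQ_def, ← tsum_mul_left]
      exact tsum_congr fun i => key _ (hlam_nonneg _)
    have h := Summable.sum_add_tsum_nat_add
      (f := fun i => lam i/(lam i+κ0) - (lam i/(lam i+κ0))^2) k sumLL2
    have hhd : 0 ≤ ∑ i ∈ Finset.range k, (lam i/(lam i+κ0) - (lam i/(lam i+κ0))^2) :=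
      Finset.sum_nonneg fun i _ =>
        sub_nonneg.2 (pow_le_of_le_one (hL0 i) (hL1 i) two_ne_zero)
    have htl : (∑' i, (lam (i+k)/(lam (i+k)+κ0) - (lam (i+k)/(lam (i+k)+κ0))^2))
        = ∑' i, (lam (k+i)/(lam (k+i)+κ0) - (lam (k+i)/(lam (k+i)+κ0))^2) :=
      tsum_congr fun i => by rw [add_comm]
    rw [e1, hDL, ← h, htl]
    linarith only [hhd]
  have hTD : κ0 * ((n:ℝ)-k)^2 ≤ T * D := by
    have h1 : ((n:ℝ)-k)^2 ≤ A^2 :=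
      pow_le_pow_left₀ (by linarith only [hklt] : (0:ℝ) ≤ (n:ℝ)-k) hA_ge 2
    calc κ0 * ((n:ℝ)-k)^2 ≤ κ0 * A^2 := mul_le_mul_of_nonneg_left h1 hκ0.le
      _ ≤ κ0 * (T * Q) := mul_le_mul_of_nonneg_left hCS hκ0.le
      _ = T * (κ0 * Q) := by ring
      _ ≤ T * D := mul_le_mul_of_nonneg_left hQD hTpos.le
  have hDpos : 0 < D := by
    by_contra h
    push_neg at h
    have h2 : T * D ≤ 0 := mul_nonpos_of_nonneg_of_nonpos hTpos.le h
    have h3 := mul_pos hκ0 (pow_pos (by linarith only [hklt] : (0:ℝ) < (n:ℝ)-k) 2)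
    linarith only [h2, h3, hTD]
  -- weighted effective rank bound
  have hW : T^2 * (∑' i, (lam (k+i)/(lam (k+i)+κ0))^2) ≤ A^2 * S :=
    weighted_rank (fun i => lam (k+i)) κ0 hκ0 (fun i => hlam_nonneg _) sumTl sumTl2
  have htail2 : (∑' i, (lam (k+i)/(lam (k+i)+κ0))^2) ≤ A^2*S/T^2 := by
    rw [le_div_iff₀ (by positivity)]
    linarith only [hW]
  have hD2 : A - A^2*S/T^2 ≤ D := by
    have h := Summable.sum_add_tsum_nat_add (f := fun i => (lam i/(lam i+κ0))^2) k sumL2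
    have htl : (∑' i, (lam (i+k)/(lam (i+k)+κ0))^2)
        = ∑' i, (lam (k+i)/(lam (k+i)+κ0))^2 := tsum_congr fun i => by rw [add_comm]
    rw [htl] at h
    have hh2 : ∑ i ∈ Finset.range k, (lam i/(lam i+κ0))^2
        ≤ ∑ i ∈ Finset.range k, lam i/(lam i+κ0) :=
      Finset.sum_le_sum fun i _ => pow_le_of_le_one (hL0 i) (hL1 i) two_ne_zero
    have hD' : D = (n:ℝ) - ∑' i, (lam i/(lam i+κ0))^2 := hD_def
    linarith only [htail2, h, hh2, hsplitL, hD']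
  -- rho
  set ρ := (n:ℝ)*S/T^2 with hρ_def
  have hρ0 : 0 ≤ ρ := by positivity
  have hρ1 : ρ < 1 := by
    rw [hρ_def, div_lt_one (by positivity)]
    have h := hRk ▸ hRkn
    have h2 := (lt_div_iff₀ hSpos).mp h
    linarith only [h2]
  have hρeq : (1 - (n:ℝ)/Rk)⁻¹ = (1-ρ)⁻¹ := by
    rw [hRk, hρ_def, div_div_eq_mul_div]
  -- key bounds
  have keyA : (1-ε)^2*(1-ρ)*(n:ℝ) ≤ D := by
    have hAρ : A - A^2*ρ/(n:ℝ) = A - A^2*S/T^2 := by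
      rw [hρ_def]
      field_simp
    have h := alg_keyA (n:ℝ) (k:ℝ) A ρ ε hnR hkR0 hklt hA_ge hA_le hρ0 hρ1.le
      hε0 hεlt1.le hεB
    rw [hAρ] at h
    exact h.trans hD2
  have keyC : (1-ε)^2*((n:ℝ)/D) ≤ (1-ρ)⁻¹ := by
    rw [show (1-ε)^2*((n:ℝ)/D) = ((1-ε)^2*(n:ℝ))/D from by ring, inv_eq_one_div,
      div_le_div_iff₀ hDpos (by linarith only [hρ1] : (0:ℝ) < 1-ρ)]
    nlinarith only [keyA]
  have keyB : (1-ε)^2*((n:ℝ)/D)*κ0 ≤ T/(n:ℝ) := by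
    rw [show (1-ε)^2*((n:ℝ)/D)*κ0 = ((1-ε)^2*(n:ℝ)*κ0)/D from by ring,
      div_le_div_iff₀ hDpos hnR]
    have h1e : (0:ℝ) ≤ (1-ε)*(n:ℝ) := mul_nonneg (by linarith only [hεlt1]) hnR.le
    have hsq : ((1-ε)*(n:ℝ))^2 ≤ ((n:ℝ)-k)^2 := by
      apply pow_le_pow_left₀ h1e (by linarith only [hεk]) 2
    linarith only [hTD, mul_le_mul_of_nonneg_right hsq hκ0.le]
  -- target sums
  set s : Set ℕ := {i : ℕ | (i : ℕ∞) < l} with hs_def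
  have hcompl : sᶜ = {i : ℕ | l ≤ (i:ℕ∞)} := by
    ext i; simp [hs_def, not_lt]
  set f1 : ℕ → ℝ := fun i => (1 - lam i / (lam i + κ0)) ^ 2 * v i ^ 2 with hf1_def
  have hf1nonneg : ∀ i, 0 ≤ f1 i := fun i => mul_nonneg (sq_nonneg _) (sq_nonneg _)
  have hf1le : ∀ i, f1 i ≤ v i ^ 2 := by
    intro i
    have h1 : 0 ≤ 1 - lam i/(lam i+κ0) := by linarith only [hL1 i]
    have h2 : 1 - lam i/(lam i+κ0) ≤ 1 := by linarith only [hL0 i]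
    have h3 : (1 - lam i/(lam i+κ0))^2 ≤ 1 := by nlinarith only [h1, h2]
    calc f1 i = (1 - lam i/(lam i+κ0))^2 * v i ^ 2 := rfl
      _ ≤ 1 * v i ^ 2 := mul_le_mul_of_nonneg_right h3 (sq_nonneg _)
      _ = v i ^ 2 := one_mul _
  have sumf1 : Summable f1 := Summable.of_nonneg_of_le hf1nonneg hf1le hv
  have hsplitP : (∑' i : ↥s, f1 i) + (∑' i : ↥sᶜ, f1 i) = ∑' i, f1 i :=
    Summable.tsum_subtype_add_tsum_subtype_compl sumf1 s
  set V := ∑' i : {i : ℕ // (i : ℕ∞) < l}, v i.1 ^ 2 / lam i.1 with hV_def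
  set W := ∑' i : {i : ℕ // l ≤ (i : ℕ∞)}, v i.1 ^ 2 with hW_def
  have hV0 : 0 ≤ V := tsum_nonneg fun i => div_nonneg (sq_nonneg _) (hlam_nonneg _)
  have hW0 : 0 ≤ W := tsum_nonneg fun i => sq_nonneg _
  have sumVs : Summable (fun i : ↥s => v (i:ℕ)^2 / lam (i:ℕ)) := by
    induction l using WithTop.recTopCoe with
    | top => exact (hl_top rfl).subtype s
    | coe m =>
      have hfin : s.Finite := by
        apply Set.Finite.subset (Set.finite_Iio m)
        intro i hi
        simp only [hs_def, Set.mem_setOf_eq] at hi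
        exact Set.mem_Iio.mpr (by exact_mod_cast (show (i:ℕ∞) < (m:ℕ∞) from hi))
      have : Finite ↥s := hfin.to_subtype
      exact Summable.of_finite
  have boundV : (∑' i : ↥s, f1 i) ≤ κ0 * V := by
    have e : κ0 * V = ∑' i : ↥s, κ0 * (v (i:ℕ)^2/lam (i:ℕ)) := by
      rw [tsum_mul_left, hV_def]
      rfl
    rw [e]
    apply Summable.tsum_le_tsum ?_ (sumf1.subtype s) (sumVs.mul_left κ0)
    intro (i : ↥s)
    have hpos : 0 < lam (i:ℕ) := hlam_pos_l _ i.2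
    have e2 : 1 - lam (i:ℕ)/(lam (i:ℕ)+κ0) = κ0/(lam (i:ℕ)+κ0) := by
      rw [eq_div_iff (hdenom _).ne']
      field_simp
      ring
    have hc : (κ0/(lam (i:ℕ)+κ0))^2 ≤ κ0/lam (i:ℕ) := by
      rw [div_pow, div_le_div_iff₀ (by positivity) hpos]
      nlinarith only [sq_nonneg (lam (i:ℕ)), mul_nonneg (hlam_nonneg (i:ℕ)) hκ0.le,
        mul_nonneg (mul_nonneg hκ0.le hκ0.le) (hlam_nonneg (i:ℕ)), hκ0,
        mul_nonneg hκ0.le (sq_nonneg (lam (i:ℕ))),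
        mul_nonneg (mul_nonneg hκ0.le hκ0.le) hκ0.le]
    show f1 (i:ℕ) ≤ κ0 * (v (i:ℕ)^2/lam (i:ℕ))
    rw [hf1_def]
    calc (1 - lam (i:ℕ)/(lam (i:ℕ)+κ0))^2 * v (i:ℕ)^2
        = (κ0/(lam (i:ℕ)+κ0))^2 * v (i:ℕ)^2 := by rw [e2]
      _ ≤ (κ0/lam (i:ℕ)) * v (i:ℕ)^2 := mul_le_mul_of_nonneg_right hc (sq_nonneg _)
      _ = κ0 * (v (i:ℕ)^2/lam (i:ℕ)) := by ring
  have boundW : (∑' i : ↥sᶜ, f1 i) ≤ W := by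
    rw [hcompl]
    apply Summable.tsum_le_tsum (fun i => hf1le _) (sumf1.subtype _) (hv.subtype _)
  have hP_le : (∑' i, f1 i) ≤ κ0*V + W := by
    rw [← hsplitP]
    exact add_le_add boundV boundW
  have hE0fac : 0 ≤ (1-ε)^2*((n:ℝ)/D) := by positivity
  rw [hρeq]
  calc (1-ε)^2 * ((n:ℝ)/D * (∑' i, f1 i + σ2))
      = ((1-ε)^2*((n:ℝ)/D))*(∑' i, f1 i) + ((1-ε)^2*((n:ℝ)/D))*σ2 := by ring
    _ ≤ ((1-ε)^2*((n:ℝ)/D))*(κ0*V + W) + ((1-ε)^2*((n:ℝ)/D))*σ2 := by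
        have h5 := mul_le_mul_of_nonneg_left hP_le hE0fac
        linarith only [h5]
    _ = ((1-ε)^2*((n:ℝ)/D)*κ0)*V + ((1-ε)^2*((n:ℝ)/D))*(σ2+W) := by ring
    _ ≤ (T/(n:ℝ))*V + (1-ρ)⁻¹*(σ2+W) := by
        apply add_le_add (mul_le_mul_of_nonneg_right keyB hV0)
          (mul_le_mul_of_nonneg_right keyC (by linarith only [hσ2, hW0]))
    _ = T*V/(n:ℝ) + (1-ρ)⁻¹*(σ2+W) := by ring
end
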